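/- Existence and uniqueness of the normalized standing wave: for every ε > 0 there exists exactly one C² function Φ : ℝ → ℝ satisfying ε² Φ''(x) = f(Φ(x)) for all x ∈ ℝ, Φ(0) = 0, and Φ(x) → ±1 as x → ±∞; moreover this Φ satisfies −1 < Φ(x) < 1 and Φ'(x) > 0 for all x ∈ ℝ, and ε Φ'(x) = √(2F(Φ(x))) for all x ∈ ℝ. -/

import Mathlib

open Filter Set

namespace SW

noncomputable def G (F : ℝ → ℝ) (s : ℝ) : ℝ := Real.sqrt (2 * F s)

lemma G_nonneg (F : ℝ → ℝ) (s : ℝ) : 0 ≤ G F s := Real.sqrt_nonneg _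

lemma G_pos {F : ℝ → ℝ} {s : ℝ} (h : 0 < F s) : 0 < G F s :=
  Real.sqrt_pos.2 (by linarith)

lemma G_cont {F : ℝ → ℝ} (hF : Continuous F) : Continuous (G F) :=
  Real.continuous_sqrt.comp (continuous_const.mul hF)

lemma G_sq {F : ℝ → ℝ} {s : ℝ} (h : 0 ≤ F s) : (G F s) ^ 2 = 2 * F s := by
  rw [show G F s ^ 2 = G F s * G F s from sq (G F s) ▸ rfl]
  exact Real.mul_self_sqrt (by linarith)

lemma hasDerivAt_G {F : ℝ → ℝ} (hF : ContDiff ℝ 2 F) {s : ℝ} (h : 0 < F s) :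
    HasDerivAt (G F) (deriv F s / G F s) s := by
  have hdF : HasDerivAt F (deriv F s) s :=
    (hF.differentiable (by norm_num)).differentiableAt.hasDerivAt
  have h2F : HasDerivAt (fun t => 2 * F t) (2 * deriv F s) s := hdF.const_mul 2
  have hsq : HasDerivAt Real.sqrt (1 / (2 * Real.sqrt (2 * F s))) (2 * F s) :=
    Real.hasDerivAt_sqrt (by linarith)
  have := hsq.comp s h2F
  refine this.congr_deriv ?_
  have hG : G F s ≠ 0 := ne_of_gt (G_pos h)
  unfold G at hG ⊢
  field_simp

-- quadratic bound near a degenerate zero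
lemma quadBound {F : ℝ → ℝ} (hF : ContDiff ℝ 2 F) {a : ℝ} (hFa : F a = 0)
    (hda : deriv F a = 0) :
    ∃ C : ℝ, 0 < C ∧ ∀ s, |s - a| ≤ 1 → F s ≤ C * (s - a) ^ 2 := by
  -- deriv F is C¹, so deriv (deriv F) is continuous, bounded on compact [a-1,a+1]
  have hdF : ContDiff ℝ 1 (deriv F) := (contDiff_succ_iff_deriv.1 (by norm_num; exact hF : ContDiff ℝ (1+1) F)).2.2
  have hcont : Continuous (deriv (deriv F)) := (contDiff_succ_iff_deriv.1 (by norm_num; exact hdF : ContDiff ℝ (0+1) (deriv F))).2.2.continuous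
  obtain ⟨M, hM⟩ := (isCompact_Icc (a := a - 1) (b := a + 1)).exists_bound_of_continuousOn
    hcont.continuousOn
  have hdiff : ∀ x ∈ Icc (a-1) (a+1), DifferentiableAt ℝ (deriv F) x := fun x _ =>
    (hdF.differentiable one_ne_zero).differentiableAt
  have hM' : ∀ x ∈ Icc (a-1) (a+1), ‖deriv (deriv F) x‖ ≤ max M 0 :=
    fun x hx => le_trans (hM x hx) (le_max_left _ _)
  have hlip : ∀ s ∈ Icc (a-1) (a+1), |deriv F s| ≤ (max M 0) * |s - a| := by
    intro s hs
    have := Convex.norm_image_sub_le_of_norm_deriv_le hdiff hM' (convex_Icc _ _)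
      (by constructor <;> simp <;> linarith : a ∈ Icc (a-1) (a+1)) hs
    simpa [hda, Real.norm_eq_abs] using this
  refine ⟨max M 0 + 1, by positivity, fun s hs => ?_⟩
  have hsIcc : s ∈ Icc (a-1) (a+1) := by
    rcases abs_le.1 hs with ⟨l, r⟩; constructor <;> linarith
  have hFd : ∀ x, HasDerivAt F (deriv F x) x := fun x =>
    (hF.differentiable (by norm_num)).differentiableAt.hasDerivAt
  rcases lt_trichotomy s a with hlt | heq | hgt
  · obtain ⟨c, hc, hslope⟩ := exists_hasDerivAt_eq_slope F (deriv F) hlt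
      (hF.continuous.continuousOn) (fun x _ => hFd x)
    have hcI : c ∈ Icc (a-1) (a+1) := by
      rcases hc with ⟨l, r⟩; rcases abs_le.1 hs with ⟨l2, r2⟩
      constructor <;> linarith
    have h2 : F s = deriv F c * (s - a) := by
      rw [hslope]; field_simp [hFa, sub_ne_zero.2 (ne_of_gt hlt)]; rw [hFa]; ring
    have h3 : |F s| ≤ (max M 0) * |c - a| * |s - a| := by
      rw [h2, abs_mul]
      exact mul_le_mul_of_nonneg_right (hlip c hcI) (abs_nonneg _)
    have h4 : |c - a| ≤ |s - a| := by
      rcases hc with ⟨l, r⟩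
      rw [abs_of_nonpos (by linarith), abs_of_nonpos (by linarith)]; linarith
    calc F s ≤ |F s| := le_abs_self _
      _ ≤ (max M 0) * |c - a| * |s - a| := h3
      _ ≤ (max M 0) * |s - a| * |s - a| := by
          apply mul_le_mul_of_nonneg_right _ (abs_nonneg _)
          exact mul_le_mul_of_nonneg_left h4 (le_max_right _ _)
      _ ≤ (max M 0 + 1) * (s-a)^2 := by
          rw [mul_assoc, abs_mul_abs_self, ← sq]
          nlinarith [sq_nonneg (s-a)]
  · rw [heq, hFa]; positivity
  · obtain ⟨c, hc, hslope⟩ := exists_hasDerivAt_eq_slope F (deriv F) hgt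
      (hF.continuous.continuousOn) (fun x _ => hFd x)
    have hcI : c ∈ Icc (a-1) (a+1) := by
      rcases hc with ⟨l, r⟩; rcases abs_le.1 hs with ⟨l2, r2⟩
      constructor <;> linarith
    have h2 : F s = deriv F c * (s - a) := by
      have hne : s - a ≠ 0 := sub_ne_zero.2 (ne_of_gt hgt)
      rw [hslope, hFa, sub_zero]; field_simp
    have h3 : |F s| ≤ (max M 0) * |c - a| * |s - a| := by
      rw [h2, abs_mul]
      exact mul_le_mul_of_nonneg_right (hlip c hcI) (abs_nonneg _)
    have h4 : |c - a| ≤ |s - a| := by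
      rcases hc with ⟨l, r⟩
      rw [abs_of_nonneg (by linarith), abs_of_nonneg (by linarith)]; linarith
    calc F s ≤ |F s| := le_abs_self _
      _ ≤ (max M 0) * |c - a| * |s - a| := h3
      _ ≤ (max M 0) * |s - a| * |s - a| := by
          apply mul_le_mul_of_nonneg_right _ (abs_nonneg _)
          exact mul_le_mul_of_nonneg_left h4 (le_max_right _ _)
      _ ≤ (max M 0 + 1) * (s-a)^2 := by
          rw [mul_assoc, abs_mul_abs_self, ← sq]
          nlinarith [sq_nonneg (s-a)]

noncomputable def Hf (F : ℝ → ℝ) (ε : ℝ) (φ : ℝ) : ℝ := ∫ s in (0:ℝ)..φ, ε / G F s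

variable {F : ℝ → ℝ} {ε : ℝ}

section
variable (hF : ContDiff ℝ 2 F) (hpos : ∀ s ∈ Ioo (-1:ℝ) 1, 0 < F s) (hε : 0 < ε)
include hF hpos

lemma u_contOn : ContinuousOn (fun s => ε / G F s) (Ioo (-1:ℝ) 1) := by
  apply ContinuousOn.div continuousOn_const
  · exact (Real.continuous_sqrt.comp (continuous_const.mul hF.continuous)).continuousOn
  · exact fun s hs => ne_of_gt (G_pos (hpos s hs))

lemma u_intble {a b : ℝ} (ha : a ∈ Ioo (-1:ℝ) 1) (hb : b ∈ Ioo (-1:ℝ) 1) :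
    IntervalIntegrable (fun s => ε / G F s) MeasureTheory.volume a b :=
  ((u_contOn hF hpos).mono (Set.ordConnected_Ioo.uIcc_subset ha hb)).intervalIntegrable

lemma hasDerivAt_H {φ : ℝ} (hφ : φ ∈ Ioo (-1:ℝ) 1) :
    HasDerivAt (Hf F ε) (ε / G F φ) φ := by
  have h0 : (0:ℝ) ∈ Ioo (-1:ℝ) 1 := by constructor <;> norm_num
  exact intervalIntegral.integral_hasDerivAt_right (u_intble hF hpos h0 hφ)
    ((u_contOn hF hpos).stronglyMeasurableAtFilter isOpen_Ioo φ hφ)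
    ((u_contOn hF hpos).continuousAt (Ioo_mem_nhds hφ.1 hφ.2))

lemma H_contOn : ContinuousOn (Hf F ε) (Ioo (-1:ℝ) 1) :=
  fun x hx => (hasDerivAt_H hF hpos hx).continuousAt.continuousWithinAt

include hε in
lemma H_mono : StrictMonoOn (Hf F ε) (Ioo (-1:ℝ) 1) := by
  apply strictMonoOn_of_deriv_pos (convex_Ioo _ _) (H_contOn hF hpos)
  intro x hx
  rw [interior_Ioo] at hx
  rw [(hasDerivAt_H hF hpos hx).deriv]
  exact div_pos hε (G_pos (hpos x hx))

omit hF hpos in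
lemma H_zero : Hf F ε 0 = 0 := intervalIntegral.integral_same


omit hF hpos in
lemma G_le {C : ℝ} {a s : ℝ} (hC0 : 0 ≤ C) (hC : F s ≤ C * (s - a)^2) :
    G F s ≤ Real.sqrt (2 * C) * |s - a| := by
  have h1 : G F s ≤ Real.sqrt ((2 * C) * (s - a)^2) :=
    Real.sqrt_le_sqrt (by nlinarith)
  rwa [Real.sqrt_mul (by positivity), Real.sqrt_sq_eq_abs] at h1

include hε in
lemma H_top {C : ℝ} (hCpos : 0 < C) (hC : ∀ s, |s - 1| ≤ 1 → F s ≤ C * (s - 1)^2) :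
    ∀ M : ℝ, ∃ φ, φ ∈ Ioo (-1:ℝ) 1 ∧ 0 ≤ φ ∧ M < Hf F ε φ := by
  intro M
  set c : ℝ := ε / Real.sqrt (2 * C) with hc
  have hsC : 0 < Real.sqrt (2 * C) := Real.sqrt_pos.2 (by linarith)
  have hcpos : 0 < c := div_pos hε hsC
  set φ : ℝ := 1 - Real.exp (-(max M 0 + 1) / c) with hφdef
  have hexp1 : Real.exp (-(max M 0 + 1) / c) < 1 := by
    rw [Real.exp_lt_one_iff]
    apply div_neg_of_neg_of_pos _ hcpos
    have := le_max_right M 0; linarith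
  have hexp0 : 0 < Real.exp (-(max M 0 + 1) / c) := Real.exp_pos _
  have hφmem : φ ∈ Ioo (0:ℝ) 1 :=
    Set.mem_Ioo.2 ⟨by rw [hφdef]; linarith, by rw [hφdef]; linarith⟩
  have hφmem' : φ ∈ Ioo (-1:ℝ) 1 := ⟨by linarith [hφmem.1], hφmem.2⟩
  refine ⟨φ, hφmem', le_of_lt hφmem.1, ?_⟩
  -- w and its derivative
  set w : ℝ → ℝ := fun s => -c * Real.log (1 - s) with hw
  have hwderiv : ∀ s ∈ Ioo (-1:ℝ) 1, HasDerivAt w (c / (1 - s)) s := by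
    intro s hs
    have h1s : (0:ℝ) < 1 - s := by linarith [hs.2]
    have hlin : HasDerivAt (fun t : ℝ => 1 - t) (-1) s := by
      simpa using (hasDerivAt_id s).const_sub 1
    have hlog : HasDerivAt (fun t : ℝ => Real.log (1 - t)) ((1 - s)⁻¹ * (-1)) s :=
      (Real.hasDerivAt_log (ne_of_gt h1s)).comp s hlin
    have := hlog.const_mul (-c)
    refine this.congr_deriv ?_
    ring
  -- the key differential inequality
  have hkey : ∀ x ∈ Ioo (0:ℝ) φ, c / (1 - x) ≤ ε / G F x := by
    intro x hx
    have hxm : x ∈ Ioo (-1:ℝ) 1 := ⟨by linarith [hx.1], lt_trans hx.2 hφmem.2⟩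
    have h1x : (0:ℝ) < 1 - x := by linarith [hxm.2]
    have hGpos : 0 < G F x := G_pos (hpos x hxm)
    have hGle : G F x ≤ Real.sqrt (2*C) * (1 - x) := by
      have := G_le (F := F) (le_of_lt hCpos)
        (hC x (by rw [abs_le]; constructor <;> [linarith [hx.1]; linarith [hxm.2]]))
      rwa [abs_of_nonpos (by linarith), neg_sub] at this
    have : ε / (Real.sqrt (2*C) * (1 - x)) ≤ ε / G F x :=
      div_le_div_of_nonneg_left (le_of_lt hε) hGpos hGle
    calc c / (1 - x) = ε / (Real.sqrt (2*C) * (1 - x)) := by rw [hc, div_div]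
      _ ≤ ε / G F x := this
  -- monotonicity of Hf - w on [0, φ]
  have hmono : MonotoneOn (fun s => Hf F ε s - w s) (Icc 0 φ) := by
    have hsub : Icc (0:ℝ) φ ⊆ Ioo (-1:ℝ) 1 := fun x hx =>
      ⟨by linarith [hx.1], lt_of_le_of_lt hx.2 hφmem.2⟩
    have hder : ∀ x ∈ Ioo (0:ℝ) φ, HasDerivAt (fun s => Hf F ε s - w s)
        (ε / G F x - c / (1 - x)) x := fun x hx =>
      (hasDerivAt_H hF hpos (hsub (Ioo_subset_Icc_self hx))).sub
        (hwderiv x (hsub (Ioo_subset_Icc_self hx)))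
    apply monotoneOn_of_deriv_nonneg (convex_Icc _ _)
    · intro x hx
      exact ((hasDerivAt_H hF hpos (hsub hx)).sub (hwderiv x (hsub hx))).continuousAt.continuousWithinAt
    · intro x hx
      rw [interior_Icc] at hx
      exact ((hder x hx).differentiableAt).differentiableWithinAt
    · intro x hx
      rw [interior_Icc] at hx
      rw [(hder x hx).deriv]
      linarith [hkey x hx]
  have h0φ : (fun s => Hf F ε s - w s) 0 ≤ (fun s => Hf F ε s - w s) φ :=
    hmono ⟨le_refl _, le_of_lt hφmem.1⟩ ⟨le_of_lt hφmem.1, le_refl _⟩ (le_of_lt hφmem.1)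
  have hw0 : w 0 = 0 := by simp [hw]
  have hwφ : w φ = max M 0 + 1 := by
    rw [hw]; simp only [hφdef, sub_sub_cancel, Real.log_exp]
    field_simp
  have hH0 : Hf F ε 0 = 0 := intervalIntegral.integral_same
  simp only [hH0, hw0, hwφ, sub_zero] at h0φ
  have := le_max_left M 0
  linarith


include hε in
lemma H_bot {C : ℝ} (hCpos : 0 < C) (hC : ∀ s, |s + 1| ≤ 1 → F s ≤ C * (s + 1)^2) :
    ∀ M : ℝ, ∃ φ, φ ∈ Ioo (-1:ℝ) 1 ∧ φ ≤ 0 ∧ Hf F ε φ < M := by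
  intro M
  set c : ℝ := ε / Real.sqrt (2 * C) with hc
  have hsC : 0 < Real.sqrt (2 * C) := Real.sqrt_pos.2 (by linarith)
  have hcpos : 0 < c := div_pos hε hsC
  set φ : ℝ := Real.exp (-(max (-M) 0 + 1) / c) - 1 with hφdef
  have hexp1 : Real.exp (-(max (-M) 0 + 1) / c) < 1 := by
    rw [Real.exp_lt_one_iff]
    apply div_neg_of_neg_of_pos _ hcpos
    have := le_max_right (-M) 0; linarith
  have hexp0 : 0 < Real.exp (-(max (-M) 0 + 1) / c) := Real.exp_pos _
  have hφmem : φ ∈ Ioo (-1:ℝ) 0 :=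
    Set.mem_Ioo.2 ⟨by rw [hφdef]; linarith, by rw [hφdef]; linarith⟩
  have hφmem' : φ ∈ Ioo (-1:ℝ) 1 := ⟨hφmem.1, by linarith [hφmem.2]⟩
  refine ⟨φ, hφmem', le_of_lt hφmem.2, ?_⟩
  set w : ℝ → ℝ := fun s => c * Real.log (1 + s) with hw
  have hwderiv : ∀ s ∈ Ioo (-1:ℝ) 1, HasDerivAt w (c / (1 + s)) s := by
    intro s hs
    have h1s : (0:ℝ) < 1 + s := by linarith [hs.1]
    have hlin : HasDerivAt (fun t : ℝ => 1 + t) 1 s := by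
      simpa using (hasDerivAt_id s).const_add 1
    have hlog : HasDerivAt (fun t : ℝ => Real.log (1 + t)) ((1 + s)⁻¹ * 1) s :=
      (Real.hasDerivAt_log (ne_of_gt h1s)).comp s hlin
    have := hlog.const_mul c
    refine this.congr_deriv ?_
    ring
  have hkey : ∀ x ∈ Ioo φ (0:ℝ), c / (1 + x) ≤ ε / G F x := by
    intro x hx
    have hxm : x ∈ Ioo (-1:ℝ) 1 := ⟨lt_trans hφmem.1 hx.1, by linarith [hx.2]⟩
    have h1x : (0:ℝ) < 1 + x := by linarith [hxm.1]
    have hGpos : 0 < G F x := G_pos (hpos x hxm)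
    have hGle : G F x ≤ Real.sqrt (2*C) * (1 + x) := by
      have hCx : F x ≤ C * (x - (-1))^2 := by
        rw [show x - (-1) = x + 1 by ring]
        exact hC x (by rw [abs_le]; constructor <;> [linarith [hxm.1]; linarith [hx.2]])
      have := G_le (F := F) (le_of_lt hCpos) hCx
      rwa [show x - (-1) = x + 1 by ring, abs_of_nonneg (by linarith),
        show x + 1 = 1 + x by ring] at this
    have : ε / (Real.sqrt (2*C) * (1 + x)) ≤ ε / G F x :=
      div_le_div_of_nonneg_left (le_of_lt hε) hGpos hGle
    calc c / (1 + x) = ε / (Real.sqrt (2*C) * (1 + x)) := by rw [hc, div_div]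
      _ ≤ ε / G F x := this
  have hmono : MonotoneOn (fun s => Hf F ε s - w s) (Icc φ 0) := by
    have hsub : Icc φ (0:ℝ) ⊆ Ioo (-1:ℝ) 1 := fun x hx =>
      ⟨lt_of_lt_of_le hφmem.1 hx.1, by linarith [hx.2]⟩
    have hder : ∀ x ∈ Ioo φ (0:ℝ), HasDerivAt (fun s => Hf F ε s - w s)
        (ε / G F x - c / (1 + x)) x := fun x hx =>
      (hasDerivAt_H hF hpos (hsub (Ioo_subset_Icc_self hx))).sub
        (hwderiv x (hsub (Ioo_subset_Icc_self hx)))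
    apply monotoneOn_of_deriv_nonneg (convex_Icc _ _)
    · intro x hx
      exact ((hasDerivAt_H hF hpos (hsub hx)).sub (hwderiv x (hsub hx))).continuousAt.continuousWithinAt
    · intro x hx
      rw [interior_Icc] at hx
      exact ((hder x hx).differentiableAt).differentiableWithinAt
    · intro x hx
      rw [interior_Icc] at hx
      rw [(hder x hx).deriv]
      linarith [hkey x hx]
  have h0φ : (fun s => Hf F ε s - w s) φ ≤ (fun s => Hf F ε s - w s) 0 :=
    hmono ⟨le_refl _, le_of_lt hφmem.2⟩ ⟨le_of_lt hφmem.2, le_refl _⟩ (le_of_lt hφmem.2)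
  have hw0 : w 0 = 0 := by simp [hw]
  have hwφ : w φ = -(max (-M) 0 + 1) := by
    rw [hw]; simp only [hφdef, add_sub_cancel, Real.log_exp]
    field_simp
  have hH0 : Hf F ε 0 = 0 := intervalIntegral.integral_same
  simp only [hH0, hw0, hwφ, sub_zero] at h0φ
  have := le_max_left (-M) 0
  linarith


include hε in
lemma exists_good {C₁ C₂ : ℝ} (hC₁pos : 0 < C₁)
    (hC₁ : ∀ s, |s - 1| ≤ 1 → F s ≤ C₁ * (s - 1)^2)
    (hC₂pos : 0 < C₂) (hC₂ : ∀ s, |s + 1| ≤ 1 → F s ≤ C₂ * (s + 1)^2) :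
    ∃ Φ : ℝ → ℝ,
      (∀ x, Φ x ∈ Ioo (-1:ℝ) 1) ∧
      (∀ x, Hf F ε (Φ x) = x) ∧
      ContDiff ℝ 2 Φ ∧
      (∀ x, HasDerivAt Φ (G F (Φ x) / ε) x) ∧
      (∀ x, ε ^ 2 * deriv (deriv Φ) x = deriv F (Φ x)) ∧
      Φ 0 = 0 ∧
      Tendsto Φ atTop (nhds 1) ∧ Tendsto Φ atBot (nhds (-1)) := by
  have hmonoH := H_mono hF hpos hε
  -- surjectivity
  have hex : ∀ x : ℝ, ∃ φ, φ ∈ Ioo (-1:ℝ) 1 ∧ Hf F ε φ = x := by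
    intro x
    obtain ⟨b, hb, -, hxb⟩ := H_top hF hpos hε hC₁pos hC₁ x
    obtain ⟨a, ha, -, hax⟩ := H_bot hF hpos hε hC₂pos hC₂ x
    have hab : a < b := by
      by_contra h
      push_neg at h
      have := hmonoH.monotoneOn hb ha h
      linarith
    have hsub : Icc a b ⊆ Ioo (-1:ℝ) 1 :=
      (Set.ordConnected_Ioo.out ha hb : Icc a b ⊆ _)
    have hIVT := intermediate_value_Icc (le_of_lt hab)
      ((H_contOn (ε := ε) hF hpos).mono hsub)
    obtain ⟨φ, hφab, hφx⟩ := hIVT ⟨le_of_lt hax, le_of_lt hxb⟩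
    exact ⟨φ, hsub hφab, hφx⟩
  classical
  set Φ : ℝ → ℝ := fun x => (hex x).choose with hΦdef
  have hmem : ∀ x, Φ x ∈ Ioo (-1:ℝ) 1 := fun x => (hex x).choose_spec.1
  have hHΦ : ∀ x, Hf F ε (Φ x) = x := fun x => (hex x).choose_spec.2
  have hleft : ∀ φ ∈ Ioo (-1:ℝ) 1, Φ (Hf F ε φ) = φ := fun φ hφ =>
    hmonoH.injOn (hmem _) hφ (hHΦ (Hf F ε φ))
  have hΦ0 : Φ 0 = 0 := by
    have h0 : (0:ℝ) ∈ Ioo (-1:ℝ) 1 := by constructor <;> norm_num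
    have := hleft 0 h0
    rwa [H_zero] at this
  have hΦlt : ∀ {x y : ℝ}, Hf F ε x < y → x ∈ Ioo (-1:ℝ) 1 → x < Φ y := by
    intro x y hxy hx
    by_contra h
    push_neg at h
    have := hmonoH.monotoneOn (hmem y) hx h
    rw [hHΦ] at this
    linarith
  have hΦlt' : ∀ {x y : ℝ}, y < Hf F ε x → x ∈ Ioo (-1:ℝ) 1 → Φ y < x := by
    intro x y hxy hx
    by_contra h
    push_neg at h
    have := hmonoH.monotoneOn hx (hmem y) h
    rw [hHΦ] at this
    linarith
  -- continuity of Φ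
  have hcontΦ : ∀ x, ContinuousAt Φ x := by
    intro x
    rw [Metric.continuousAt_iff]
    intro δ hδ
    set t := Φ x with ht
    have htm := hmem x
    set η : ℝ := min (δ/2) (min ((1 - t)/2) ((t + 1)/2)) with hη
    have hη0 : 0 < η := by
      apply lt_min (by linarith)
      apply lt_min <;> [linarith [htm.2]; linarith [htm.1]]
    have hη1 : η ≤ (1 - t)/2 := le_trans (min_le_right _ _) (min_le_left _ _)
    have hη2 : η ≤ (t + 1)/2 := le_trans (min_le_right _ _) (min_le_right _ _)
    have hηδ : η ≤ δ/2 := min_le_left _ _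
    have hmem1 : t - η ∈ Ioo (-1:ℝ) 1 := ⟨by linarith [htm.1], by linarith [htm.2]⟩
    have hmem2 : t + η ∈ Ioo (-1:ℝ) 1 := ⟨by linarith [htm.1], by linarith [htm.2]⟩
    have h1 : Hf F ε (t - η) < x := by
      rw [← hHΦ x]
      exact hmonoH hmem1 htm (by linarith)
    have h2 : x < Hf F ε (t + η) := by
      rw [← hHΦ x]
      exact hmonoH htm hmem2 (by linarith)
    refine ⟨min (x - Hf F ε (t - η)) (Hf F ε (t + η) - x),
      lt_min (by linarith) (by linarith), ?_⟩
    intro y hy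
    rw [Real.dist_eq, abs_lt] at hy
    have hy1 : Hf F ε (t - η) < y := by
      have := hy.1
      have := min_le_left (x - Hf F ε (t - η)) (Hf F ε (t + η) - x)
      linarith
    have hy2 : y < Hf F ε (t + η) := by
      have := hy.2
      have := min_le_right (x - Hf F ε (t - η)) (Hf F ε (t + η) - x)
      linarith
    have hl := hΦlt hy1 hmem1
    have hu := hΦlt' hy2 hmem2
    rw [Real.dist_eq, abs_lt]
    constructor <;> [linarith; linarith]
  -- derivative of Φ
  have hGposΦ : ∀ x, 0 < G F (Φ x) := fun x => G_pos (hpos _ (hmem x))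
  have hΦderiv : ∀ x, HasDerivAt Φ (G F (Φ x) / ε) x := by
    intro x
    have h := HasDerivAt.of_local_left_inverse (hcontΦ x)
      (hasDerivAt_H hF hpos (hmem x))
      (ne_of_gt (div_pos hε (hGposΦ x)))
      (Eventually.of_forall hHΦ)
    have heq : (ε / G F (Φ x))⁻¹ = G F (Φ x) / ε := by
      rw [inv_div]
    rwa [heq] at h
  have hΦdiff : Differentiable ℝ Φ := fun x => (hΦderiv x).differentiableAt
  have hderiv_eq : deriv Φ = fun x => G F (Φ x) / ε := funext fun x => (hΦderiv x).deriv
  have hcΦ : Continuous Φ := continuous_iff_continuousAt.2 hcontΦ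
  -- C¹ and C²
  have hGcd : ∀ x, ContDiffAt ℝ 1 (G F) (Φ x) := by
    intro x
    have h2F : ContDiffAt ℝ 1 (fun s => 2 * F s) (Φ x) :=
      (contDiff_const.mul (hF.of_le (by norm_num))).contDiffAt
    exact (Real.contDiffAt_sqrt (ne_of_gt (by linarith [hpos _ (hmem x)]))).comp _ h2F
  have hΦC1 : ContDiff ℝ 1 Φ := by
    rw [contDiff_one_iff_deriv]
    refine ⟨hΦdiff, ?_⟩
    rw [hderiv_eq]
    exact ((G_cont hF.continuous).comp hcΦ).div_const ε
  have hdC1 : ContDiff ℝ 1 (deriv Φ) := by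
    rw [hderiv_eq]
    rw [contDiff_iff_contDiffAt]
    intro x
    exact (((hGcd x).comp x (hΦC1.contDiffAt)).div_const ε)
  have hΦC2 : ContDiff ℝ 2 Φ := by
    rw [show (2 : WithTop ℕ∞) = 1 + 1 by norm_num, contDiff_succ_iff_deriv]
    exact ⟨hΦdiff, by simp, hdC1⟩
  -- second derivative / ODE
  have hODE : ∀ x, ε ^ 2 * deriv (deriv Φ) x = deriv F (Φ x) := by
    intro x
    have hcomp : HasDerivAt (fun y => G F (Φ y))
        (deriv F (Φ x) / G F (Φ x) * (G F (Φ x) / ε)) x :=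
      (hasDerivAt_G hF (hpos _ (hmem x))).comp x (hΦderiv x)
    have hd2 : HasDerivAt (deriv Φ)
        (deriv F (Φ x) / G F (Φ x) * (G F (Φ x) / ε) / ε) x := by
      rw [hderiv_eq]
      exact hcomp.div_const ε
    rw [hd2.deriv]
    have hGne : G F (Φ x) ≠ 0 := ne_of_gt (hGposΦ x)
    have hεne : ε ≠ 0 := ne_of_gt hε
    field_simp
  -- limits
  have hlimtop : Tendsto Φ atTop (nhds 1) := by
    rw [tendsto_order]
    constructor
    · intro c hc
      set φ : ℝ := (max c (-1) + 1)/2 with hφd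
      have h1 : max c (-1) < 1 := max_lt hc (by norm_num)
      have h2 : (-1:ℝ) ≤ max c (-1) := le_max_right _ _
      have hφmem : φ ∈ Ioo (-1:ℝ) 1 := ⟨by rw [hφd]; linarith, by rw [hφd]; linarith⟩
      have hcφ : c < φ := by
        have := le_max_left c (-1)
        rw [hφd]; linarith
      rw [eventually_atTop]
      refine ⟨Hf F ε φ + 1, fun y hy => ?_⟩
      have := hΦlt (x := φ) (y := y) (by linarith) hφmem
      linarith
    · intro c hc
      exact Eventually.of_forall fun y => lt_trans (hmem y).2 hc
  have hlimbot : Tendsto Φ atBot (nhds (-1)) := by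
    rw [tendsto_order]
    constructor
    · intro c hc
      exact Eventually.of_forall fun y => lt_trans hc (hmem y).1
    · intro c hc
      set φ : ℝ := (min c 1 + (-1))/2 with hφd
      have h1 : -1 < min c 1 := lt_min hc (by norm_num)
      have h2 : min c 1 ≤ 1 := min_le_right _ _
      have hφmem : φ ∈ Ioo (-1:ℝ) 1 := ⟨by rw [hφd]; linarith, by rw [hφd]; linarith⟩
      have hcφ : φ < c := by
        have := min_le_left c 1
        rw [hφd]; linarith
      rw [eventually_atBot]
      refine ⟨Hf F ε φ - 1, fun y hy => ?_⟩
      have := hΦlt' (x := φ) (y := y) (by linarith) hφmem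
      linarith
  exact ⟨Φ, hmem, hHΦ, hΦC2, hΦderiv, hODE, hΦ0, hlimtop, hlimbot⟩


include hε in
lemma energy_zero (h1 : F 1 = 0) (hFnn : ∀ s, 0 ≤ F s)
    {Φ : ℝ → ℝ} (hΦ : ContDiff ℝ 2 Φ)
    (hODE : ∀ x, ε ^ 2 * deriv (deriv Φ) x = deriv F (Φ x))
    (htop : Tendsto Φ atTop (nhds 1)) :
    ∀ x, ε ^ 2 * (deriv Φ x) ^ 2 = 2 * F (Φ x) := by
  have hd1 : Differentiable ℝ Φ := hΦ.differentiable (by norm_num)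
  have hΦd : ContDiff ℝ 1 (deriv Φ) :=
    (contDiff_succ_iff_deriv.1 (by norm_num; exact hΦ : ContDiff ℝ (1+1) Φ)).2.2
  have hd2 : Differentiable ℝ (deriv Φ) := hΦd.differentiable one_ne_zero
  have hΦ' : ∀ x, HasDerivAt Φ (deriv Φ x) x := fun x => (hd1 x).hasDerivAt
  have hΦ'' : ∀ x, HasDerivAt (deriv Φ) (deriv (deriv Φ) x) x := fun x => (hd2 x).hasDerivAt
  have hFd : ∀ s, HasDerivAt F (deriv F s) s := fun s =>
    ((hF.differentiable (by norm_num)) s).hasDerivAt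
  set e : ℝ → ℝ := fun x => ε ^ 2 * (deriv Φ x) ^ 2 - 2 * F (Φ x) with he
  have hE : ∀ x, HasDerivAt e 0 x := by
    intro x
    have h1e : HasDerivAt (fun x => (deriv Φ x) ^ 2)
        (2 * deriv Φ x ^ 1 * deriv (deriv Φ) x) x := by
      simpa using (hΦ'' x).fun_pow 2
    have h2e : HasDerivAt (fun x => F (Φ x)) (deriv F (Φ x) * deriv Φ x) x :=
      (hFd _).comp x (hΦ' x)
    have := ((h1e.const_mul (ε^2)).sub (h2e.const_mul 2))
    refine this.congr_deriv ?_
    linear_combination (2 * deriv Φ x) * hODE x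
  have hconst : ∀ x, e x = e 0 :=
    fun x => is_const_of_deriv_eq_zero (fun y => (hE y).differentiableAt)
      (fun y => (hE y).deriv) x 0
  -- limit of F ∘ Φ
  have limF : Tendsto (fun x => F (Φ x)) atTop (nhds 0) := by
    have := (hF.continuous.tendsto 1).comp htop
    rwa [h1] at this
  have limd2 : Tendsto (fun x => ε ^ 2 * (deriv Φ x) ^ 2) atTop (nhds (e 0)) := by
    have heq : (fun x => ε ^ 2 * (deriv Φ x) ^ 2) = fun x => e 0 + 2 * F (Φ x) := by
      funext x
      have := hconst x
      rw [he] at this ⊢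
      simp only at this ⊢
      linarith
    rw [heq]
    have := (limF.const_mul 2).const_add (e 0)
    simpa using this
  have he0 : 0 ≤ e 0 := by
    have := ge_of_tendsto' limd2 (fun x => by positivity)
    linarith
  -- show e 0 = 0
  rcases eq_or_lt_of_le he0 with heq0 | hgt
  · intro x
    have h2 := hconst x
    have h0 : e 0 = 0 := heq0.symm
    rw [he] at h2 h0
    simp only at h2 h0
    linarith
  · exfalso
    set L : ℝ := Real.sqrt (e 0) / ε with hL
    have hLpos : 0 < L := div_pos (Real.sqrt_pos.2 hgt) hε
    have limabs : Tendsto (fun x => |deriv Φ x|) atTop (nhds L) := by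
      have h1' := (Real.continuous_sqrt.tendsto (e 0)).comp limd2
      have h2' := h1'.div_const ε
      have heq : (fun x => Real.sqrt (ε ^ 2 * (deriv Φ x) ^ 2) / ε)
          = fun x => |deriv Φ x| := by
        funext x
        rw [show ε ^ 2 * (deriv Φ x) ^ 2 = (ε * deriv Φ x) ^ 2 by ring,
          Real.sqrt_sq_eq_abs, abs_mul, abs_of_pos hε]
        field_simp
      rw [hL]
      have : (fun x => Real.sqrt (ε ^ 2 * deriv Φ x ^ 2) / ε) = fun x => |deriv Φ x| := heq
      simpa [this] using h2'
    have half : ∀ᶠ x in atTop, L / 2 < |deriv Φ x| :=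
      limabs.eventually (lt_mem_nhds (by linarith))
    have hub : ∀ᶠ x in atTop, Φ x < 2 := htop.eventually (gt_mem_nhds (by norm_num))
    have hlb : ∀ᶠ x in atTop, 0 < Φ x := htop.eventually (lt_mem_nhds (by norm_num))
    obtain ⟨A, hA⟩ := eventually_atTop.1 (half.and (hub.and hlb))
    have hAbs : L / 2 < |deriv Φ A| := (hA A le_rfl).1
    have hdcont : Continuous (deriv Φ) := hΦd.continuous
    -- deriv Φ has constant sign on [A, ∞)
    have hsign : ∀ x, A ≤ x → (0 < deriv Φ A → L / 2 < deriv Φ x)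
        ∧ (deriv Φ A < 0 → deriv Φ x < -(L / 2)) := by
      intro x hx
      constructor
      · intro hpos'
        by_contra h
        push_neg at h
        have hne : deriv Φ x ≠ 0 ∧ True := ⟨?_, trivial⟩
        · have hxle : deriv Φ x < 0 ∨ 0 < deriv Φ x := hne.1.lt_or_gt
          rcases hxle with hneg | hpos2
          · -- IVT gives a zero of deriv Φ in [A, x]
            obtain ⟨c, hc, hc0⟩ : ∃ c ∈ Icc A x, deriv Φ c = 0 := by
              have : (0:ℝ) ∈ Icc (deriv Φ x) (deriv Φ A) := ⟨le_of_lt hneg, le_of_lt hpos'⟩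
              obtain ⟨c, hc, hc0⟩ := intermediate_value_Icc' hx hdcont.continuousOn this
              exact ⟨c, hc, hc0⟩
            have := (hA c hc.1).1
            rw [hc0] at this
            simp at this
            linarith
          · have := (hA x hx).1
            rw [abs_of_pos hpos2] at this
            linarith
        · intro h0
          have := (hA x hx).1
          rw [h0] at this
          simp at this
          linarith
      · intro hneg'
        by_contra h
        push_neg at h
        have hne : deriv Φ x ≠ 0 := by
          intro h0
          have := (hA x hx).1
          rw [h0] at this
          simp at this
          linarith
        rcases hne.lt_or_gt with hneg2 | hpos2
        · have := (hA x hx).1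
          rw [abs_of_neg hneg2] at this
          linarith
        · obtain ⟨c, hc, hc0⟩ : ∃ c ∈ Icc A x, deriv Φ c = 0 := by
            have : (0:ℝ) ∈ Icc (deriv Φ A) (deriv Φ x) := ⟨le_of_lt hneg', le_of_lt hpos2⟩
            obtain ⟨c, hc, hc0⟩ := intermediate_value_Icc hx hdcont.continuousOn this
            exact ⟨c, hc, hc0⟩
          have := (hA c hc.1).1
          rw [hc0] at this
          simp at this
          linarith
    have hAne : deriv Φ A ≠ 0 := by
      intro h0
      rw [h0] at hAbs
      simp at hAbs
      linarith
    rcases hAne.lt_or_gt with hAneg | hApos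
    · -- Φ decreases at least linearly ⇒ Φ → -∞, contradicts 0 < Φ
      set x : ℝ := A + (Φ A) / (L / 2) + 1 with hx
      have hxA : A < x := by
        have h0 : 0 < Φ A := (hA A le_rfl).2.2
        have : 0 < (Φ A) / (L / 2) := by positivity
        rw [hx]; linarith
      obtain ⟨c, hc, hcs⟩ := exists_hasDerivAt_eq_slope Φ (deriv Φ) hxA
        (hd1.continuous.continuousOn) (fun y _ => hΦ' y)
      have hcA : A ≤ c := le_of_lt hc.1
      have hcneg : deriv Φ c < -(L/2) := (hsign c hcA).2 hAneg
      have hΦx : Φ x = Φ A + deriv Φ c * (x - A) := by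
        have hne : x - A ≠ 0 := ne_of_gt (by linarith)
        rw [hcs]
        field_simp
        ring
      have hxpos : 0 < Φ x := (hA x (le_of_lt hxA)).2.2
      have hΦA : 0 < Φ A := (hA A le_rfl).2.2
      have hxA' : x - A = (Φ A) / (L / 2) + 1 := by rw [hx]; ring
      have : Φ x < 0 := by
        rw [hΦx, hxA']
        have hd : deriv Φ c * ((Φ A) / (L / 2) + 1) < -(L/2) * ((Φ A) / (L / 2) + 1) := by
          apply mul_lt_mul_of_pos_right hcneg
          positivity
        have he2 : -(L/2) * ((Φ A) / (L / 2) + 1) = -(Φ A) - L/2 := by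
          field_simp
          ring
        nlinarith
      linarith
    · -- Φ increases at least linearly ⇒ Φ → ∞, contradicts Φ < 2
      set x : ℝ := A + (2 - Φ A) / (L / 2) + 1 with hx
      have hΦA2 : Φ A < 2 := (hA A le_rfl).2.1
      have hxA : A < x := by
        have : 0 < (2 - Φ A) / (L / 2) := by
          apply div_pos (by linarith) (by linarith)
        rw [hx]; linarith
      obtain ⟨c, hc, hcs⟩ := exists_hasDerivAt_eq_slope Φ (deriv Φ) hxA
        (hd1.continuous.continuousOn) (fun y _ => hΦ' y)
      have hcA : A ≤ c := le_of_lt hc.1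
      have hcpos : L/2 < deriv Φ c := (hsign c hcA).1 hApos
      have hΦx : Φ x = Φ A + deriv Φ c * (x - A) := by
        have hne : x - A ≠ 0 := ne_of_gt (by linarith)
        rw [hcs]
        field_simp
        ring
      have hxlt : Φ x < 2 := (hA x (le_of_lt hxA)).2.1
      have hxA' : x - A = (2 - Φ A) / (L / 2) + 1 := by rw [hx]; ring
      have : 2 < Φ x := by
        rw [hΦx, hxA']
        have hd : (L/2) * ((2 - Φ A) / (L / 2) + 1) < deriv Φ c * ((2 - Φ A) / (L / 2) + 1) := by
          apply mul_lt_mul_of_pos_right hcpos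
          have : 0 < (2 - Φ A) / (L / 2) := div_pos (by linarith) (by linarith)
          linarith
        have he2 : (L/2) * ((2 - Φ A) / (L / 2) + 1) = (2 - Φ A) + L/2 := by
          field_simp
        nlinarith
      linarith

omit hF hpos in
include hε in
lemma never_hits {C a : ℝ} (hCpos : 0 < C) (hC : ∀ s, |s - a| ≤ 1 → F s ≤ C * (s - a)^2)
    (ha : a ≠ 0)
    {Φ : ℝ → ℝ} (hd1 : Differentiable ℝ Φ)
    (hkey : ∀ x, ε ^ 2 * (deriv Φ x)^2 = 2 * F (Φ x))
    (hΦ0 : Φ 0 = 0) : ∀ x, Φ x ≠ a := by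
  set S : Set ℝ := {x : ℝ | Φ x = a} with hS
  set K : ℝ := Real.sqrt (2 * C) / ε with hK
  have hK0 : 0 ≤ K := div_nonneg (Real.sqrt_nonneg _) (le_of_lt hε)
  have hopen : IsOpen S := by
    rw [Metric.isOpen_iff]
    intro x₀ hx₀
    have hΦx₀ : Φ x₀ = a := hx₀
    obtain ⟨r, hr, hrs⟩ := Metric.continuousAt_iff.1 (hd1.continuous.continuousAt (x := x₀))
      1 one_pos
    refine ⟨r/2, by linarith, ?_⟩
    have hclose : ∀ y ∈ Icc (x₀ - r/2) (x₀ + r/2), |Φ y - a| ≤ 1 := by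
      intro y hy
      have : dist y x₀ < r := by
        rw [Real.dist_eq, abs_lt]
        constructor <;> [linarith [hy.1]; linarith [hy.2]]
      have := hrs this
      rw [Real.dist_eq, hΦx₀] at this
      exact le_of_lt this
    have hbound : ∀ y ∈ Icc (x₀ - r/2) (x₀ + r/2), ‖deriv Φ y‖ ≤ K * ‖Φ y - a‖ := by
      intro y hy
      have h1 := hC (Φ y) (hclose y hy)
      have h2 := hkey y
      have hd2 : (deriv Φ y)^2 ≤ (K * |Φ y - a|)^2 := by
        have hKsq : (K * |Φ y - a|)^2 = (2*C) / ε^2 * (Φ y - a)^2 := by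
          rw [mul_pow, hK, div_pow, Real.sq_sqrt (by linarith), sq_abs]
        rw [hKsq]
        rw [div_mul_eq_mul_div, le_div_iff₀ (by positivity)]
        nlinarith
      have habs : |deriv Φ y| ≤ K * |Φ y - a| := by
        have hs := Real.sqrt_le_sqrt hd2
        rwa [Real.sqrt_sq_eq_abs, Real.sqrt_sq (by positivity)] at hs
      simpa [Real.norm_eq_abs] using habs
    -- forward Gronwall on [x₀, x₀ + r/2]
    have hfwd : ∀ y ∈ Icc x₀ (x₀ + r/2), Φ y = a := by
      have hgron := norm_le_gronwallBound_of_norm_deriv_right_le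
        (f := fun y => Φ y - a) (f' := deriv Φ) (δ := 0) (K := K) (ε := 0)
        (a := x₀) (b := x₀ + r/2)
        ((hd1.continuous.sub continuous_const).continuousOn)
        (fun y _ => ((hd1 y).hasDerivAt.sub_const a).hasDerivWithinAt)
        (by simp [hΦx₀])
        (fun y hy => by
          have hyIcc : y ∈ Icc (x₀ - r/2) (x₀ + r/2) :=
            ⟨by linarith [hy.1], le_of_lt hy.2⟩
          simpa using hbound y hyIcc)
      intro y hy
      have := hgron y hy
      rw [gronwallBound_ε0] at this
      simp only [zero_mul] at this
      have : ‖Φ y - a‖ ≤ 0 := by simpa using this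
      have := le_antisymm this (norm_nonneg _)
      rwa [norm_eq_zero, sub_eq_zero] at this
    -- backward Gronwall via reflection
    have hbwd : ∀ y ∈ Icc (x₀ - r/2) x₀, Φ y = a := by
      have hgron := norm_le_gronwallBound_of_norm_deriv_right_le
        (f := fun y => Φ (2*x₀ - y) - a) (f' := fun y => -deriv Φ (2*x₀ - y))
        (δ := 0) (K := K) (ε := 0) (a := x₀) (b := x₀ + r/2)
        (((hd1.continuous.comp (continuous_const.sub continuous_id)).sub continuous_const).continuousOn)
        (fun y _ => by
          have hinner : HasDerivAt (fun y : ℝ => 2*x₀ - y) (-1) y := by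
            simpa using (hasDerivAt_id y).const_sub (2*x₀)
          have houter : HasDerivAt Φ (deriv Φ (2*x₀ - y)) (2*x₀ - y) :=
            (hd1 _).hasDerivAt
          have := (houter.comp y hinner).sub_const a
          have heq : deriv Φ (2*x₀ - y) * (-1) = -deriv Φ (2*x₀ - y) := by ring
          rw [heq] at this
          exact this.hasDerivWithinAt)
        (by simp [hΦx₀, show 2*x₀ - x₀ = x₀ by ring])
        (fun y hy => by
          have hyIcc : 2*x₀ - y ∈ Icc (x₀ - r/2) (x₀ + r/2) :=
            ⟨by linarith [hy.2], by linarith [hy.1]⟩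
          have := hbound (2*x₀ - y) hyIcc
          simpa using this)
      intro y hy
      have hz : 2*x₀ - y ∈ Icc x₀ (x₀ + r/2) := ⟨by linarith [hy.2], by linarith [hy.1]⟩
      have := hgron (2*x₀ - y) hz
      rw [gronwallBound_ε0] at this
      simp only [zero_mul] at this
      have h0 : ‖Φ (2*x₀ - (2*x₀ - y)) - a‖ ≤ 0 := by simpa using this
      rw [show 2*x₀ - (2*x₀ - y) = y by ring] at h0
      have := le_antisymm h0 (norm_nonneg _)
      rwa [norm_eq_zero, sub_eq_zero] at this
    intro y hy
    rw [Metric.mem_ball, Real.dist_eq, abs_lt] at hy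
    rcases le_or_gt x₀ y with hle | hlt
    · exact hfwd y ⟨hle, by linarith [hy.2]⟩
    · exact hbwd y ⟨by linarith [hy.1], le_of_lt hlt⟩
  -- clopen argument
  have hclosed : IsClosed S := isClosed_eq hd1.continuous continuous_const
  rcases isClopen_iff.1 ⟨hclosed, hopen⟩ with hemp | huniv
  · intro x hx
    have : x ∈ S := hx
    rw [hemp] at this
    exact this
  · exfalso
    have h0S : (0:ℝ) ∈ S := by rw [huniv]; trivial
    have h0a : Φ 0 = a := h0S
    rw [hΦ0] at h0a
    exact ha h0a.symm



include hε in
lemma props (h1 : F 1 = 0) (hFnn : ∀ s, 0 ≤ F s)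
    {C₁ C₂ : ℝ} (hC₁pos : 0 < C₁) (hC₁ : ∀ s, |s - 1| ≤ 1 → F s ≤ C₁ * (s - 1)^2)
    (hC₂pos : 0 < C₂) (hC₂ : ∀ s, |s + 1| ≤ 1 → F s ≤ C₂ * (s + 1)^2)
    {Φ : ℝ → ℝ} (hΦ : ContDiff ℝ 2 Φ)
    (hODE : ∀ x, ε ^ 2 * deriv (deriv Φ) x = deriv F (Φ x))
    (hΦ0 : Φ 0 = 0)
    (htop : Tendsto Φ atTop (nhds 1)) (hbot : Tendsto Φ atBot (nhds (-1))) :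
    ∀ x, Φ x ∈ Ioo (-1:ℝ) 1 ∧ 0 < deriv Φ x ∧
      ε * deriv Φ x = Real.sqrt (2 * F (Φ x)) ∧ Hf F ε (Φ x) = x := by
  have hd1 : Differentiable ℝ Φ := hΦ.differentiable (by norm_num)
  have hΦd : ContDiff ℝ 1 (deriv Φ) :=
    (contDiff_succ_iff_deriv.1 (by norm_num; exact hΦ : ContDiff ℝ (1+1) Φ)).2.2
  have hdcont : Continuous (deriv Φ) := hΦd.continuous
  have hkey : ∀ x, ε ^ 2 * (deriv Φ x)^2 = 2 * F (Φ x) :=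
    energy_zero hF hpos hε h1 hFnn hΦ hODE htop
  have hne1 : ∀ x, Φ x ≠ 1 := never_hits hε hC₁pos hC₁ one_ne_zero hd1 hkey hΦ0
  have hne1' : ∀ x, Φ x ≠ -1 := by
    have hC₂' : ∀ s, |s - (-1)| ≤ 1 → F s ≤ C₂ * (s - (-1))^2 := by
      intro s hs
      rw [show s - (-1) = s + 1 by ring] at hs ⊢
      exact hC₂ s hs
    exact never_hits hε hC₂pos hC₂' (by norm_num) hd1 hkey hΦ0
  have hmem : ∀ x, Φ x ∈ Ioo (-1:ℝ) 1 := by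
    intro x
    constructor
    · rcases lt_or_ge (-1:ℝ) (Φ x) with h | h
      · exact h
      exfalso
      have hlt : Φ x < -1 := lt_of_le_of_ne h (hne1' x)
      obtain ⟨c, -, hc⟩ := intermediate_value_uIcc (a := x) (b := 0)
        (hd1.continuous.continuousOn)
        (show (-1:ℝ) ∈ uIcc (Φ x) (Φ 0) by
          rw [hΦ0, mem_uIcc]
          left; constructor <;> [linarith; norm_num])
      exact hne1' c hc
    · rcases lt_or_ge (Φ x) 1 with h | h
      · exact h
      exfalso
      have hlt : 1 < Φ x := lt_of_le_of_ne h (Ne.symm (hne1 x))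
      obtain ⟨c, -, hc⟩ := intermediate_value_uIcc (a := 0) (b := x)
        (hd1.continuous.continuousOn)
        (show (1:ℝ) ∈ uIcc (Φ 0) (Φ x) by
          rw [hΦ0, mem_uIcc]
          left; constructor <;> [norm_num; linarith])
      exact hne1 c hc
  have hFpos : ∀ x, 0 < F (Φ x) := fun x => hpos _ (hmem x)
  have hdne : ∀ x, deriv Φ x ≠ 0 := by
    intro x h0
    have := hkey x
    rw [h0] at this
    simp at this
    exact absurd this.symm (ne_of_gt (by linarith [hFpos x]))
  have hsign : ∀ x y, deriv Φ x < 0 → deriv Φ y < 0 := by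
    intro x y hx
    rcases (hdne y).lt_or_gt with h | h
    · exact h
    exfalso
    obtain ⟨c, -, hc⟩ := intermediate_value_uIcc (a := x) (b := y)
      hdcont.continuousOn
      (show (0:ℝ) ∈ uIcc (deriv Φ x) (deriv Φ y) by
        rw [mem_uIcc]; left; constructor <;> [linarith; linarith])
    exact hdne c hc
  have hdpos : ∀ x, 0 < deriv Φ x := by
    rcases (hdne 0).lt_or_gt with hneg | hpos0
    · exfalso
      have hallneg : ∀ x, deriv Φ x < 0 := fun y => hsign 0 y hneg
      have hmvt : ∀ y z : ℝ, y < z → Φ z < Φ y := by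
        intro y z hyz
        obtain ⟨c, -, hcs⟩ := exists_hasDerivAt_eq_slope Φ (deriv Φ) hyz
          (hd1.continuous.continuousOn) (fun w _ => (hd1 w).hasDerivAt)
        have hc := hallneg c
        rw [hcs] at hc
        have hzy : 0 < z - y := by linarith
        rw [div_neg_iff] at hc
        rcases hc with ⟨h1', h2'⟩ | ⟨h1', h2'⟩ <;> linarith
      have hΦ1 : Φ 1 < 0 := by
        have := hmvt 0 1 (by norm_num)
        rwa [hΦ0] at this
      have hle : ∀ᶠ y in atTop, Φ y ≤ Φ 1 := by
        rw [eventually_atTop]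
        exact ⟨2, fun y hy => le_of_lt (hmvt 1 y (by linarith))⟩
      have := le_of_tendsto htop hle
      linarith
    · intro x
      rcases (hdne x).lt_or_gt with h | h
      · exact absurd (hsign x 0 h) (not_lt.2 (le_of_lt hpos0))
      · exact h
  have hid : ∀ x, ε * deriv Φ x = Real.sqrt (2 * F (Φ x)) := by
    intro x
    have hsq : (ε * deriv Φ x)^2 = 2 * F (Φ x) := by
      rw [mul_pow]; exact hkey x
    have hnn : 0 ≤ ε * deriv Φ x := mul_nonneg (le_of_lt hε) (le_of_lt (hdpos x))
    rw [← hsq, Real.sqrt_sq hnn]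
  have hGeq : ∀ x, deriv Φ x = G F (Φ x) / ε := by
    intro x
    have h := hid x
    rw [show Real.sqrt (2 * F (Φ x)) = G F (Φ x) from rfl] at h
    field_simp at h ⊢
    linarith
  have hψ : ∀ x, HasDerivAt (fun y => Hf F ε (Φ y) - y) 0 x := by
    intro x
    have hH := hasDerivAt_H (ε := ε) hF hpos (hmem x)
    have hcomp : HasDerivAt (fun y => Hf F ε (Φ y)) (ε / G F (Φ x) * deriv Φ x) x :=
      hH.comp x (hd1 x).hasDerivAt
    have hsub : HasDerivAt (fun y => Hf F ε (Φ y) - y) _ x := hcomp.sub (hasDerivAt_id x)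
    convert hsub using 1
    rw [hGeq x]
    have hGne : G F (Φ x) ≠ 0 := ne_of_gt (G_pos (hFpos x))
    have hεne : ε ≠ 0 := ne_of_gt hε
    field_simp
    norm_num
  have hHf : ∀ x, Hf F ε (Φ x) = x := by
    intro x
    have hconstψ := is_const_of_deriv_eq_zero
      (fun y => (hψ y).differentiableAt) (fun y => (hψ y).deriv) x 0
    simp only [hΦ0] at hconstψ
    have hH00 : Hf F ε 0 = 0 := intervalIntegral.integral_same
    rw [hH00] at hconstψ
    linarith [hconstψ]
  exact fun x => ⟨hmem x, hdpos x, hid x, hHf x⟩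

end




end SW


open Filter

/-- Existence and uniqueness of the normalized standing wave: for every
`ε > 0` there is exactly one `C²` function `Φ : ℝ → ℝ` with
`ε² Φ'' = f(Φ)` (`f := F'`), `Φ(0) = 0` and `Φ(x) → ±1` as `x → ±∞`;
moreover this `Φ` satisfies `−1 < Φ < 1`, `Φ' > 0` and
`ε Φ' = √(2 F(Φ))` everywhere. -/
theorem standing_wave_exists_unique
    (F : ℝ → ℝ) (hF : ContDiff ℝ 2 F)
    (h1 : F 1 = 0) (h1' : F (-1) = 0)
    (h2 : deriv F 1 = 0) (h2' : deriv F (-1) = 0)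
    (h3 : 0 < deriv (deriv F) 1) (h3' : 0 < deriv (deriv F) (-1))
    (h4 : ∀ s : ℝ, s ≠ 1 → s ≠ -1 → 0 < F s)
    (ε : ℝ) (hε : 0 < ε) :
    (∃! Φ : ℝ → ℝ,
      ContDiff ℝ 2 Φ ∧
      (∀ x : ℝ, ε ^ 2 * deriv (deriv Φ) x = deriv F (Φ x)) ∧
      Φ 0 = 0 ∧
      Tendsto Φ atTop (nhds 1) ∧
      Tendsto Φ atBot (nhds (-1))) ∧
    (∀ Φ : ℝ → ℝ,
      ContDiff ℝ 2 Φ →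
      (∀ x : ℝ, ε ^ 2 * deriv (deriv Φ) x = deriv F (Φ x)) →
      Φ 0 = 0 →
      Tendsto Φ atTop (nhds 1) →
      Tendsto Φ atBot (nhds (-1)) →
      ∀ x : ℝ, -1 < Φ x ∧ Φ x < 1 ∧ 0 < deriv Φ x ∧
        ε * deriv Φ x = Real.sqrt (2 * F (Φ x))) := by
  have hpos : ∀ s ∈ Set.Ioo (-1:ℝ) 1, 0 < F s := fun s hs =>
    h4 s (ne_of_lt hs.2) (ne_of_gt hs.1)
  have hFnn : ∀ s, 0 ≤ F s := by
    intro s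
    by_cases hs1 : s = 1
    · rw [hs1, h1]
    · by_cases hs2 : s = -1
      · rw [hs2, h1']
      · exact le_of_lt (h4 s hs1 hs2)
  obtain ⟨C₁, hC₁pos, hC₁⟩ := SW.quadBound hF h1 h2
  obtain ⟨C₂, hC₂pos, hC₂'⟩ := SW.quadBound hF h1' h2'
  have hC₂ : ∀ s, |s + 1| ≤ 1 → F s ≤ C₂ * (s + 1)^2 := by
    intro s hs
    have h := hC₂' s (by rw [show s - (-1) = s + 1 by ring]; exact hs)
    rwa [show s - (-1) = s + 1 by ring] at h
  obtain ⟨Φ₀, hmem₀, hHΦ₀, hC2₀, hd₀, hODE₀, h0₀, htop₀, hbot₀⟩ :=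
    SW.exists_good hF hpos hε hC₁pos hC₁ hC₂pos hC₂
  have propsAll := fun (Φ : ℝ → ℝ) hΦ hODE hΦ0 htop hbot =>
    SW.props hF hpos hε h1 hFnn hC₁pos hC₁ hC₂pos hC₂ (Φ := Φ) hΦ hODE hΦ0 htop hbot
  constructor
  · refine ⟨Φ₀, ⟨hC2₀, hODE₀, h0₀, htop₀, hbot₀⟩, ?_⟩
    rintro Φ ⟨hΦ, hODE, hΦ0, htop, hbot⟩
    funext x
    have hp := propsAll Φ hΦ hODE hΦ0 htop hbot x
    exact (SW.H_mono hF hpos hε).injOn hp.1 (hmem₀ x) (by rw [hp.2.2.2, hHΦ₀])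
  · intro Φ hΦ hODE hΦ0 htop hbot x
    have hp := propsAll Φ hΦ hODE hΦ0 htop hbot x
    exact ⟨hp.1.1, hp.1.2, hp.2.1, hp.2.2.1⟩
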